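/- Let n ≥ 2 be an integer, h, k positive divisors of n+1, and r = d_3(n^2-n+1) for some divisor d_3 of n+1. Then h·k·r·(n-1) - k·gcd(h,r) - h·gcd(k,r) - h·k·(n-2)·gcd(r, n+1) - gcd(gcd(h,k)·r, 2hk) is an even integer that is ≥ -2. -/

import Mathlib

lemma zmod2_of_not_dvd {z : ℤ} (hz : ¬ (2:ℤ) ∣ z) : (z : ZMod 2) = 1 := by
  have h0 : (z : ZMod 2) ≠ 0 := fun h =>
    hz (by exact_mod_cast (ZMod.intCast_zmod_eq_zero_iff_dvd z 2).1 h)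
  rcases (by decide : ∀ a : ZMod 2, a = 0 ∨ a = 1) (z : ZMod 2) with h | h
  · exact absurd h h0
  · exact h

lemma two_dvd_gcd_iff (x y : ℤ) : (2:ℤ) ∣ (Int.gcd x y : ℤ) ↔ (2:ℤ) ∣ x ∧ (2:ℤ) ∣ y := by
  constructor
  · intro hd
    exact ⟨hd.trans (Int.gcd_dvd_left _ _), hd.trans (Int.gcd_dvd_right _ _)⟩
  · rintro ⟨h1, h2⟩
    exact Int.dvd_coe_gcd h1 h2

lemma cast_zmod2_of_dvd {z : ℤ} (hz : (2:ℤ) ∣ z) : (z : ZMod 2) = 0 :=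
  (ZMod.intCast_zmod_eq_zero_iff_dvd z 2).2 (by exact_mod_cast hz)

lemma gcd_cast_zmod2 (x y : ℤ) :
    ((Int.gcd x y : ℕ) : ZMod 2) = (x : ZMod 2) + (y : ZMod 2) + (x : ZMod 2) * (y : ZMod 2) := by
  have hcast : ((Int.gcd x y : ℕ) : ZMod 2) = (((Int.gcd x y : ℤ)) : ZMod 2) := by push_cast; ring
  rw [hcast]
  by_cases hx : (2:ℤ) ∣ x <;> by_cases hy : (2:ℤ) ∣ y
  · rw [cast_zmod2_of_dvd ((two_dvd_gcd_iff x y).2 ⟨hx, hy⟩),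
        cast_zmod2_of_dvd hx, cast_zmod2_of_dvd hy]
    ring
  all_goals {
    have hg : ¬ (2:ℤ) ∣ (Int.gcd x y : ℤ) := by
      rw [two_dvd_gcd_iff]; tauto
    rw [zmod2_of_not_dvd hg]
    first
    | (rw [cast_zmod2_of_dvd hx, zmod2_of_not_dvd hy]; decide)
    | (rw [cast_zmod2_of_dvd hy, zmod2_of_not_dvd hx]; decide)
    | (rw [zmod2_of_not_dvd hx, zmod2_of_not_dvd hy]; decide) }

lemma dvd_zmod2_constraint {a b : ℤ} (h : a ∣ b) :
    ((b : ZMod 2)) * ((a : ZMod 2) + 1) = 0 := by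
  by_cases ha : (2:ℤ) ∣ a
  · rw [cast_zmod2_of_dvd (ha.trans h)]; ring
  · rw [zmod2_of_not_dvd ha]
    have h11 : ((1:ZMod 2) + 1) = 0 := by decide
    rw [h11, mul_zero]

/-- for `n ≥ 2`, positive divisors `h, k` of `n+1` and
`r = d₃(n^2-n+1)` with `d₃ ∣ n+1`, the quantity
`hkr(n-1) - k gcd(h,r) - h gcd(k,r) - hk(n-2) gcd(r,n+1) - gcd(gcd(h,k)r, 2hk)`
is an even integer that is `≥ -2`. -/
theorem stmt_8 (n h k d₃ : ℤ) (hn : 2 ≤ n)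
    (hh : h ∣ n + 1) (hk : k ∣ n + 1) (hd₃ : d₃ ∣ n + 1)
    (hhp : 0 < h) (hkp : 0 < k) (hd₃p : 0 < d₃)
    (r : ℤ) (hr : r = d₃ * (n ^ 2 - n + 1)) :
    (2 : ℤ) ∣ (h * k * r * (n - 1) - k * Int.gcd h r - h * Int.gcd k r
        - h * k * (n - 2) * Int.gcd r (n + 1) - Int.gcd (Int.gcd h k * r) (2 * h * k)) ∧
    (-2 : ℤ) ≤ h * k * r * (n - 1) - k * Int.gcd h r - h * Int.gcd k r
        - h * k * (n - 2) * Int.gcd r (n + 1) - Int.gcd (Int.gcd h k * r) (2 * h * k) := by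
  constructor
  · -- parity
    rw [show (2:ℤ) = ((2:ℕ):ℤ) by norm_num, ← ZMod.intCast_zmod_eq_zero_iff_dvd]
    have c1 := dvd_zmod2_constraint hh
    have c2 := dvd_zmod2_constraint hk
    have c3 := dvd_zmod2_constraint hd₃
    have cr : (r : ZMod 2) = (d₃ : ZMod 2) * ((n : ZMod 2)^2 - (n : ZMod 2) + 1) := by
      rw [hr]; push_cast; ring
    push_cast
    push_cast at c1 c2 c3
    rw [gcd_cast_zmod2 h r, gcd_cast_zmod2 k r, gcd_cast_zmod2 r (n+1),
        gcd_cast_zmod2 (Int.gcd h k * r) (2*h*k)]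
    push_cast
    rw [gcd_cast_zmod2 h k]
    revert c1 c2 c3 cr
    generalize (n : ZMod 2) = N
    generalize (h : ZMod 2) = H
    generalize (k : ZMod 2) = K
    generalize (d₃ : ZMod 2) = D
    generalize (r : ZMod 2) = R
    revert N H K D R
    decide
  · -- lower bound
    have hg1 : (Int.gcd h r : ℤ) ≤ h := Int.le_of_dvd hhp (Int.gcd_dvd_left _ _)
    have hg2 : (Int.gcd k r : ℤ) ≤ k := Int.le_of_dvd hkp (Int.gcd_dvd_left _ _)
    have hg3 : (Int.gcd r (n+1) : ℤ) ≤ n + 1 := Int.le_of_dvd (by linarith) (Int.gcd_dvd_right _ _)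
    have hG : (Int.gcd (Int.gcd h k * r) (2*h*k) : ℤ) ≤ 2 * h * k :=
      Int.le_of_dvd (by positivity) (Int.gcd_dvd_right _ _)
    rcases eq_or_lt_of_le hn with hn2 | hn3
    · -- n = 2
      subst hr
      have hn2' : n = 2 := hn2.symm
      subst hn2'
      norm_num at hh hk hd₃
      have hb : h ≤ 3 := Int.le_of_dvd (by norm_num) hh
      have kb : k ≤ 3 := Int.le_of_dvd (by norm_num) hk
      have db : d₃ ≤ 3 := Int.le_of_dvd (by norm_num) hd₃
      interval_cases h <;> interval_cases k <;> interval_cases d₃ <;>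
        first
        | (exfalso; omega)
        | (norm_num; decide)
        | decide
    · -- n ≥ 3
      have hn3' : 3 ≤ n := hn3
      have hrlb : n ^ 2 - n + 1 ≤ r := by
        rw [hr]
        nlinarith [mul_nonneg (by linarith : (0:ℤ) ≤ d₃ - 1)
          (by nlinarith [sq_nonneg (n-1)] : (0:ℤ) ≤ n ^ 2 - n + 1)]
      have t1 : h * k * (n - 1) * (n ^ 2 - n + 1) ≤ h * k * (n - 1) * r := by
        have : (0:ℤ) ≤ h * k * (n - 1) :=
          mul_nonneg (mul_nonneg hhp.le hkp.le) (by linarith)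
        exact mul_le_mul_of_nonneg_left hrlb this
      have t2 : k * (Int.gcd h r : ℤ) ≤ k * h :=
        mul_le_mul_of_nonneg_left hg1 (le_of_lt hkp)
      have t3 : h * (Int.gcd k r : ℤ) ≤ h * k :=
        mul_le_mul_of_nonneg_left hg2 (le_of_lt hhp)
      have t4 : h * k * (n - 2) * (Int.gcd r (n+1) : ℤ) ≤ h * k * (n - 2) * (n + 1) := by
        have : (0:ℤ) ≤ h * k * (n - 2) :=
          mul_nonneg (mul_nonneg hhp.le hkp.le) (by linarith)
        exact mul_le_mul_of_nonneg_left hg3 this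
      have key : (0:ℤ) ≤ h * k * (n ^ 3 - 3 * n ^ 2 + 3 * n - 3) := by
        have h1 : (0:ℤ) ≤ n ^ 3 - 3 * n ^ 2 + 3 * n - 3 := by nlinarith
        exact mul_nonneg (mul_nonneg hhp.le hkp.le) h1
      nlinarith [t1, t2, t3, t4, hG, key]
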